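/- Let X ~ N(μ_k, σ_k² I) on ℝ^d and let L_i be the isotropic Gaussian density with mean μ_i, covariance σ_i² I. Given positive priors P'(X_k) and P'(X_s), if ‖μ_k - μ_i‖²/(σ_k² + σ_i²) ≥ 2·ln(P'(X_s)/P'(X_k)) + d·ln(2σ_k²/(σ_k²+σ_i²)), then P'(X_k)·E[L_k(X)] ≥ P'(X_s)·E[L_i(X)]. -/

import Mathlib

open MeasureTheory Real

/-- Density of the isotropic Gaussian `N(μ, σ² I)` on `ℝ^d`. -/
noncomputable def gaussDensity (d : ℕ) (μ : EuclideanSpace ℝ (Fin d)) (σ : ℝ) :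
    EuclideanSpace ℝ (Fin d) → ℝ :=
  fun x => (2 * π * σ ^ 2) ^ (-(d : ℝ) / 2) * Real.exp (-‖x - μ‖ ^ 2 / (2 * σ ^ 2))

/-- Integral of the product of two isotropic Gaussian densities. -/
lemma gauss_prod_integral (d : ℕ) (μ1 μ2 : EuclideanSpace ℝ (Fin d)) (σ1 σ2 : ℝ)
    (h1 : 0 < σ1) (h2 : 0 < σ2) :
    ∫ x, gaussDensity d μ1 σ1 x * gaussDensity d μ2 σ2 x =
      (2 * π * (σ1 ^ 2 + σ2 ^ 2)) ^ (-(d : ℝ) / 2) *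
        Real.exp (-‖μ1 - μ2‖ ^ 2 / (2 * (σ1 ^ 2 + σ2 ^ 2))) := by
  have hs : (0:ℝ) < σ1 ^ 2 + σ2 ^ 2 := by positivity
  set a : ℝ := (σ1 ^ 2 + σ2 ^ 2) / (2 * σ1 ^ 2 * σ2 ^ 2) with ha
  have ha0 : 0 < a := by positivity
  set c : EuclideanSpace ℝ (Fin d) :=
    (σ2 ^ 2 / (σ1 ^ 2 + σ2 ^ 2)) • μ1 + (σ1 ^ 2 / (σ1 ^ 2 + σ2 ^ 2)) • μ2 with hc
  have key : ∀ x : EuclideanSpace ℝ (Fin d),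
      gaussDensity d μ1 σ1 x * gaussDensity d μ2 σ2 x =
      ((2 * π * σ1 ^ 2) ^ (-(d : ℝ) / 2) * (2 * π * σ2 ^ 2) ^ (-(d : ℝ) / 2) *
        Real.exp (-‖μ1 - μ2‖ ^ 2 / (2 * (σ1 ^ 2 + σ2 ^ 2)))) *
        Real.exp (-a * ‖x - c‖ ^ 2) := by
    intro x
    have hexp : -‖x - μ1‖ ^ 2 / (2 * σ1 ^ 2) + -‖x - μ2‖ ^ 2 / (2 * σ2 ^ 2) =
        -a * ‖x - c‖ ^ 2 + -‖μ1 - μ2‖ ^ 2 / (2 * (σ1 ^ 2 + σ2 ^ 2)) := by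
      have hs' : σ1 ^ 2 + σ2 ^ 2 ≠ 0 := ne_of_gt hs
      rw [ha, hc]
      simp only [norm_sub_sq_real, norm_add_sq_real, real_inner_smul_left, real_inner_smul_right,
        inner_add_right, norm_smul, mul_pow, sq_abs, Real.norm_eq_abs]
      field_simp
      ring
    simp only [gaussDensity]
    rw [show ∀ A B C D : ℝ, A * C * (B * D) = A * B * (C * D) by intros; ring,
      ← Real.exp_add, hexp, Real.exp_add]
    ring
  simp only [key]
  rw [integral_const_mul]
  have htrans : ∫ x : EuclideanSpace ℝ (Fin d), Real.exp (-a * ‖x - c‖ ^ 2) =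
      ∫ x : EuclideanSpace ℝ (Fin d), Real.exp (-a * ‖x‖ ^ 2) :=
    integral_sub_right_eq_self (fun y => Real.exp (-a * ‖y‖ ^ 2)) c
  rw [htrans, GaussianFourier.integral_rexp_neg_mul_sq_norm ha0, finrank_euclideanSpace_fin]
  -- constants
  have hA : (0:ℝ) < 2 * π * σ1 ^ 2 := by positivity
  have hB : (0:ℝ) < 2 * π * σ2 ^ 2 := by positivity
  have hC : (0:ℝ) < 2 * π * (σ1 ^ 2 + σ2 ^ 2) := by positivity
  have hπa : (0:ℝ) < π / a := by positivity
  have hkey : π / a = (2 * π * σ1 ^ 2) * (2 * π * σ2 ^ 2) / (2 * π * (σ1 ^ 2 + σ2 ^ 2)) := by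
    rw [ha]; field_simp
  have hconst : (2 * π * σ1 ^ 2) ^ (-(d : ℝ) / 2) * (2 * π * σ2 ^ 2) ^ (-(d : ℝ) / 2) *
      (π / a) ^ ((d : ℝ) / 2) = (2 * π * (σ1 ^ 2 + σ2 ^ 2)) ^ (-(d : ℝ) / 2) := by
    rw [hkey, Real.div_rpow (by positivity) hC.le, Real.mul_rpow hA.le hB.le,
      neg_div, Real.rpow_neg hA.le, Real.rpow_neg hB.le, Real.rpow_neg hC.le]
    have h1' : (2 * π * σ1 ^ 2) ^ ((d:ℝ)/2) ≠ 0 := by positivity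
    have h2' : (2 * π * σ2 ^ 2) ^ ((d:ℝ)/2) ≠ 0 := by positivity
    have h3' : (2 * π * (σ1 ^ 2 + σ2 ^ 2)) ^ ((d:ℝ)/2) ≠ 0 := by positivity
    field_simp
  rw [← hconst]; ring

/-- Known-class case of Theorem 3.2 (Bayesian classification): with positive priors
`P'(Xₖ)` and `P'(X_s)`, if the separability condition holds then
`P'(Xₖ)·E[Lₖ(X)] ≥ P'(X_s)·E[Lᵢ(X)]` for `X ~ N(μₖ, σₖ² I)`. -/
theorem bayes_known_class (d : ℕ) (hd : 1 ≤ d)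
    (μk μi : EuclideanSpace ℝ (Fin d)) (σk σi : ℝ) (hσk : 0 < σk) (hσi : 0 < σi)
    (Pk Ps : ℝ) (hPk : 0 < Pk) (hPs : 0 < Ps)
    (hsep : ‖μk - μi‖ ^ 2 / (σk ^ 2 + σi ^ 2) ≥
      2 * Real.log (Ps / Pk) +
        (d : ℝ) * Real.log (2 * σk ^ 2 / (σk ^ 2 + σi ^ 2))) :
    Pk * ∫ x, gaussDensity d μk σk x * gaussDensity d μk σk x ≥
      Ps * ∫ x, gaussDensity d μi σi x * gaussDensity d μk σk x := by
  have hs : (0:ℝ) < σk ^ 2 + σi ^ 2 := by positivity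
  rw [gauss_prod_integral d μk μk σk σk hσk hσk,
    gauss_prod_integral d μi μk σi σk hσi hσk,
    show σk ^ 2 + σk ^ 2 = 2 * σk ^ 2 from by ring,
    show σi ^ 2 + σk ^ 2 = σk ^ 2 + σi ^ 2 from by ring,
    norm_sub_rev μi μk]
  simp only [sub_self, norm_zero, ne_eq, OfNat.ofNat_ne_zero, not_false_eq_true, zero_pow,
    neg_zero, zero_div, Real.exp_zero, mul_one]
  set D : ℝ := (d : ℝ) with hD
  have e1 : Pk * (2 * π * (2 * σk ^ 2)) ^ (-D / 2) =
      Real.exp (Real.log Pk + (-D / 2) * Real.log (2 * π * (2 * σk ^ 2))) := by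
    rw [Real.exp_add, Real.exp_log hPk, Real.rpow_def_of_pos (by positivity), mul_comm (-D/2)]
  have e2 : Ps * ((2 * π * (σk ^ 2 + σi ^ 2)) ^ (-D / 2) *
      Real.exp (-‖μk - μi‖ ^ 2 / (2 * (σk ^ 2 + σi ^ 2)))) =
      Real.exp (Real.log Ps + (-D / 2) * Real.log (2 * π * (σk ^ 2 + σi ^ 2)) +
        -‖μk - μi‖ ^ 2 / (2 * (σk ^ 2 + σi ^ 2))) := by
    rw [Real.exp_add, Real.exp_add, Real.exp_log hPs,
      Real.rpow_def_of_pos (by positivity), mul_comm (-D/2)]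
    ring
  rw [ge_iff_le, e1, e2, Real.exp_le_exp]
  rw [Real.log_div hPs.ne' hPk.ne', Real.log_div (by positivity) hs.ne'] at hsep
  have hlog1 : Real.log (2 * π * (2 * σk ^ 2)) = Real.log (2 * π) + Real.log (2 * σk ^ 2) :=
    Real.log_mul (by positivity) (by positivity)
  have hlog2 : Real.log (2 * π * (σk ^ 2 + σi ^ 2)) =
      Real.log (2 * π) + Real.log (σk ^ 2 + σi ^ 2) :=
    Real.log_mul (by positivity) (by positivity)
  rw [hlog1, hlog2]
  have h1 : D * (Real.log (2 * σk ^ 2) - Real.log (σk ^ 2 + σi ^ 2)) =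
      D * Real.log (2 * σk ^ 2) - D * Real.log (σk ^ 2 + σi ^ 2) := by ring
  have h2 : (-D / 2) * (Real.log (2 * π) + Real.log (2 * σk ^ 2)) =
      -(D * Real.log (2 * π)) / 2 - (D * Real.log (2 * σk ^ 2)) / 2 := by ring
  have h3 : (-D / 2) * (Real.log (2 * π) + Real.log (σk ^ 2 + σi ^ 2)) =
      -(D * Real.log (2 * π)) / 2 - (D * Real.log (σk ^ 2 + σi ^ 2)) / 2 := by ring
  have h4 : -‖μk - μi‖ ^ 2 / (2 * (σk ^ 2 + σi ^ 2)) =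
      -(‖μk - μi‖ ^ 2 / (σk ^ 2 + σi ^ 2)) / 2 := by
    field_simp
  rw [h2, h3, h4]
  linarith [hsep, h1]
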